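/- Suppose F satisfies (F1)–(F3) and let (uⁿ)_{n≥0} be the iterative linearization sequence. Then for every n ≥ 1 it holds that H(uⁿ⁻¹) − H(uⁿ) = a(uⁿ⁻¹; uⁿ − uⁿ⁻¹, uⁿ − uⁿ⁻¹) − ∫₀¹ ⟨F(uⁿ⁻¹ + t(uⁿ − uⁿ⁻¹)) − F(uⁿ⁻¹), uⁿ − uⁿ⁻¹⟩ dt. -/

import Mathlib

set_option autoImplicit false

/-- Energy-difference identity: under (F1)–(F3), for every `n ≥ 1`,
`H(uⁿ⁻¹) − H(uⁿ) = a(uⁿ⁻¹; uⁿ−uⁿ⁻¹, uⁿ−uⁿ⁻¹) − ∫₀¹ ⟨F(uⁿ⁻¹+t(uⁿ−uⁿ⁻¹)) − F(uⁿ⁻¹), uⁿ−uⁿ⁻¹⟩ dt`. -/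
theorem stmt_7
    {X : Type*} [NormedAddCommGroup X] [InnerProductSpace ℝ X] [CompleteSpace X]
    (F : X → X →L[ℝ] ℝ) (L ν : ℝ) (hL : 0 < L) (hν : 0 < ν)
    (hF1 : ∀ u v w : X, |F u w - F v w| ≤ L * ‖u - v‖ * ‖w‖)
    (hF2 : ∀ u v : X, ν * ‖u - v‖ ^ 2 ≤ F u (u - v) - F v (u - v))
    (a : X → X →ₗ[ℝ] X →ₗ[ℝ] ℝ) (α β : ℝ) (hα : 0 < α) (hβ : 0 < β)
    (hcoer : ∀ u v : X, α * ‖v‖ ^ 2 ≤ a u v v)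
    (hbdd : ∀ u v w : X, a u v w ≤ β * ‖v‖ * ‖w‖)
    (u : ℕ → X)
    (hiter : ∀ n : ℕ, ∀ w : X, a (u n) (u (n + 1)) w = a (u n) (u n) w - F (u n) w)
    (H : X → ℝ)
    (hF3 : ∀ v w : X, ∀ t : ℝ, HasDerivAt (fun s : ℝ => H (v + s • w)) (F (v + t • w) w) t) :
    ∀ n : ℕ, 1 ≤ n →
      H (u (n - 1)) - H (u n) =
        a (u (n - 1)) (u n - u (n - 1)) (u n - u (n - 1)) -
          ∫ t in (0 : ℝ)..1,
            (F (u (n - 1) + t • (u n - u (n - 1))) (u n - u (n - 1)) -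
              F (u (n - 1)) (u n - u (n - 1))) := by
  intro n hn
  obtain ⟨m, rfl⟩ : ∃ m, n = m + 1 := ⟨n - 1, (Nat.succ_pred_eq_of_pos hn).symm⟩
  simp only [Nat.add_sub_cancel]
  set v := u m with hv
  set d := u (m + 1) - u m with hd
  -- continuity of the integrand
  have hcont : Continuous fun t : ℝ => F (v + t • d) d := by
    have : LipschitzWith (Real.toNNReal (L * ‖d‖ ^ 2)) (fun t : ℝ => F (v + t • d) d) := by
      apply LipschitzWith.of_dist_le_mul
      intro s t
      have h1 := hF1 (v + s • d) (v + t • d) d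
      have harg : (v + s • d) - (v + t • d) = (s - t) • d := by
        rw [sub_smul]; abel
      rw [harg, norm_smul, Real.norm_eq_abs] at h1
      calc dist (F (v + s • d) d) (F (v + t • d) d)
          = |F (v + s • d) d - F (v + t • d) d| := Real.dist_eq _ _
        _ ≤ L * (|s - t| * ‖d‖) * ‖d‖ := h1
        _ = L * ‖d‖ ^ 2 * |s - t| := by ring
        _ ≤ (Real.toNNReal (L * ‖d‖ ^ 2) : ℝ) * dist s t := by
            rw [Real.dist_eq]
            gcongr
            exact Real.le_coe_toNNReal _
    exact this.continuous
  have hint1 : IntervalIntegrable (fun t : ℝ => F (v + t • d) d) MeasureTheory.volume 0 1 :=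
    hcont.intervalIntegrable _ _
  have hint2 : IntervalIntegrable (fun _ : ℝ => F v d) MeasureTheory.volume 0 1 :=
    intervalIntegrable_const
  -- FTC: H(v + d) - H(v) = ∫₀¹ F(v+td) d dt
  have hftc : H (v + (1 : ℝ) • d) - H (v + (0 : ℝ) • d)
      = ∫ t in (0:ℝ)..1, F (v + t • d) d := by
    refine (intervalIntegral.integral_eq_sub_of_hasDerivAt (fun t _ => hF3 v d t)
      hint1).symm
  have hH : H v - H (u (m + 1)) = -∫ t in (0:ℝ)..1, F (v + t • d) d := by
    rw [← hftc]
    have : v + (1 : ℝ) • d = u (m + 1) := by simp [hd, hv]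
    rw [this]
    simp
  -- from the iteration: a v d d = -F v d
  have ha : (a v d d : ℝ) = -F v d := by
    have h := hiter m d
    have : (a v d d : ℝ) = a v (u (m+1)) d - a v (u m) d := by
      simp [hd, map_sub]; ring
    rw [this, h]
    ring
  rw [intervalIntegral.integral_sub hint1 hint2, hH, ha]
  simp
  ring
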